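/- Let B be a finite nonempty set of points in ℝ² and R a finite set of points in ℝ². For any closed halfplanes H₁ and H₂ with B ⊆ H₁ ∩ H₂, there exist closed halfplanes H₁' ⊆ H₁ and H₂' ⊆ H₂ such that B ⊆ H₁' ∩ H₂', the boundary line of H₁' contains a point of B, the boundary line of H₂' contains a point of B, and |R ∩ interior(H₁' ∩ H₂')| ≤ |R ∩ interior(H₁ ∩ H₂)|. -/

import Mathlib

open Classical

noncomputable section

/-- Points in the plane. -/
abbrev Pt : Type := EuclideanSpace ℝ (Fin 2)

/-- The closed halfplane `{x : ⟪v, x⟫ ≤ c}`, bounded by the line `{x : ⟪v, x⟫ = c}`. -/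
def halfplane (v : Pt) (c : ℝ) : Set Pt := {x | (inner ℝ v x : ℝ) ≤ c}

/-- Given two closed halfplanes whose intersection contains all blue points, we
can shrink each of them to a closed halfplane whose boundary line passes through
a blue point, so that the intersection still contains all blue points and its
interior contains at most as many red points. -/
theorem shrink_halfplanes_to_blue (B R : Finset Pt) (hB : B.Nonempty)
    (v₁ v₂ : Pt) (c₁ c₂ : ℝ) (hv₁ : v₁ ≠ 0) (hv₂ : v₂ ≠ 0)
    (hB₁₂ : (B : Set Pt) ⊆ halfplane v₁ c₁ ∩ halfplane v₂ c₂) :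
    ∃ (v₁' v₂' : Pt) (c₁' c₂' : ℝ), v₁' ≠ 0 ∧ v₂' ≠ 0 ∧
      halfplane v₁' c₁' ⊆ halfplane v₁ c₁ ∧
      halfplane v₂' c₂' ⊆ halfplane v₂ c₂ ∧
      (B : Set Pt) ⊆ halfplane v₁' c₁' ∩ halfplane v₂' c₂' ∧
      (∃ b ∈ B, (inner ℝ v₁' b : ℝ) = c₁') ∧
      (∃ b ∈ B, (inner ℝ v₂' b : ℝ) = c₂') ∧
      (R.filter fun p => p ∈ interior (halfplane v₁' c₁' ∩ halfplane v₂' c₂')).card ≤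
        (R.filter fun p => p ∈ interior (halfplane v₁ c₁ ∩ halfplane v₂ c₂)).card := by
  refine ⟨v₁, v₂, B.sup' hB (fun b => (inner ℝ v₁ b : ℝ)),
    B.sup' hB (fun b => (inner ℝ v₂ b : ℝ)), hv₁, hv₂, ?_, ?_, ?_, ?_, ?_, ?_⟩
  · intro x hx
    have h : B.sup' hB (fun b => (inner ℝ v₁ b : ℝ)) ≤ c₁ := by
      apply Finset.sup'_le
      intro b hb
      exact (hB₁₂ hb).1
    exact le_trans hx h
  · intro x hx
    have h : B.sup' hB (fun b => (inner ℝ v₂ b : ℝ)) ≤ c₂ := by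
      apply Finset.sup'_le
      intro b hb
      exact (hB₁₂ hb).2
    exact le_trans hx h
  · intro b hb
    have hb' : b ∈ B := by exact_mod_cast hb
    exact ⟨Finset.le_sup' (fun b => (inner ℝ v₁ b : ℝ)) hb',
      Finset.le_sup' (fun b => (inner ℝ v₂ b : ℝ)) hb'⟩
  · obtain ⟨b, hb, hbe⟩ := Finset.exists_mem_eq_sup' hB (fun b => (inner ℝ v₁ b : ℝ))
    exact ⟨b, hb, hbe.symm⟩
  · obtain ⟨b, hb, hbe⟩ := Finset.exists_mem_eq_sup' hB (fun b => (inner ℝ v₂ b : ℝ))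
    exact ⟨b, hb, hbe.symm⟩
  · apply Finset.card_le_card
    apply Finset.monotone_filter_right
    intro p _ hp
    apply interior_mono _ hp
    apply Set.inter_subset_inter
    · intro x hx
      exact le_trans hx (Finset.sup'_le _ _ fun b hb => show (inner ℝ v₁ b : ℝ) ≤ c₁ from (hB₁₂ hb).1)
    · intro x hx
      exact le_trans hx (Finset.sup'_le _ _ fun b hb => show (inner ℝ v₂ b : ℝ) ≤ c₂ from (hB₁₂ hb).2)
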